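/- Theorem 3 (strict inequality): if N ≥ 3, all amplitudes are nonnegative (u i ≥ 0 for all i), and the squared amplitudes are not all equal (there exist i, j with (u i)² ≠ (u j)²), then for any three pairwise distinct positions w, w', w'' we have E[X_w² · X_{w'}² · X_{w''}²] < m₂³. -/

import Mathlib

open Finset


/-- Expectation of a real-valued random variable on the finite probability space
`Equiv.Perm (Fin N)` equipped with the uniform probability measure. -/
noncomputable def permExpect (N : ℕ) (f : Equiv.Perm (Fin N) → ℝ) : ℝ :=
  (∑ σ : Equiv.Perm (Fin N), f σ) / (Fintype.card (Equiv.Perm (Fin N)) : ℝ)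

/-- Empirical `k`-th moment of the amplitude block `u`. -/
noncomputable def empMoment (N : ℕ) (u : Fin N → ℝ) (k : ℕ) : ℝ :=
  (1 / (N : ℝ)) * ∑ i : Fin N, (u i) ^ k

lemma exists_perm_triple {N : ℕ} {w w' w'' i j k : Fin N}
    (h1 : w ≠ w') (h2 : w ≠ w'') (h3 : w' ≠ w'')
    (g1 : i ≠ j) (g2 : i ≠ k) (g3 : j ≠ k) :
    ∃ τ : Equiv.Perm (Fin N), τ w = i ∧ τ w' = j ∧ τ w'' = k := by
  classical
  set τ₁ : Equiv.Perm (Fin N) := Equiv.swap w i with hτ₁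
  have e1 : τ₁ w = i := Equiv.swap_apply_left w i
  set j' : Fin N := τ₁.symm j with hj'
  have ej : τ₁ j' = j := Equiv.apply_symm_apply τ₁ j
  have hj'w : j' ≠ w := fun h => g1 (by rw [← e1, ← h, ej])
  set τ₂ : Equiv.Perm (Fin N) := τ₁ * Equiv.swap w' j' with hτ₂
  have e2w : τ₂ w = i := by
    simp only [hτ₂, Equiv.Perm.mul_apply]
    rw [Equiv.swap_apply_of_ne_of_ne h1 (Ne.symm hj'w), e1]
  have e2w' : τ₂ w' = j := by
    simp only [hτ₂, Equiv.Perm.mul_apply, Equiv.swap_apply_left, ej]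
  set k' : Fin N := τ₂.symm k with hk'
  have ek : τ₂ k' = k := Equiv.apply_symm_apply τ₂ k
  have hk'w : k' ≠ w := fun h => g2 (by rw [← e2w, ← h, ek])
  have hk'w' : k' ≠ w' := fun h => g3 (by rw [← e2w', ← h, ek])
  refine ⟨τ₂ * Equiv.swap w'' k', ?_, ?_, ?_⟩
  · simp only [Equiv.Perm.mul_apply]
    rw [Equiv.swap_apply_of_ne_of_ne h2 (Ne.symm hk'w), e2w]
  · simp only [Equiv.Perm.mul_apply]
    rw [Equiv.swap_apply_of_ne_of_ne h3 (Ne.symm hk'w'), e2w']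
  · simp only [Equiv.Perm.mul_apply, Equiv.swap_apply_left, ek]

lemma sum_distinct_triples {N : ℕ} (F : Fin N → Fin N → Fin N → ℝ) :
    ∑ t ∈ Finset.univ.filter
        (fun t : Fin N × Fin N × Fin N => t.1 ≠ t.2.1 ∧ t.1 ≠ t.2.2 ∧ t.2.1 ≠ t.2.2),
        F t.1 t.2.1 t.2.2
      = ∑ i : Fin N, ∑ j ∈ Finset.univ.erase i, ∑ k ∈ (Finset.univ.erase i).erase j, F i j k := by
  classical
  rw [Finset.sum_filter, Fintype.sum_prod_type]
  refine Finset.sum_congr rfl fun i _ => ?_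
  rw [Fintype.sum_prod_type]
  rw [show ∑ j ∈ univ.erase i, ∑ k ∈ (univ.erase i).erase j, F i j k
      = ∑ j : Fin N, if j ≠ i then ∑ k ∈ (univ.erase i).erase j, F i j k else 0 from by
    rw [← Finset.sum_filter, Finset.filter_ne']]
  refine Finset.sum_congr rfl fun j _ => ?_
  by_cases hij : i = j
  · simp [hij]
  · rw [if_pos (Ne.symm hij)]
    rw [← Finset.filter_ne' (univ.erase i) j, Finset.sum_filter,
      ← Finset.filter_ne' univ i, Finset.sum_filter]
    refine Finset.sum_congr rfl fun k _ => ?_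
    by_cases h1 : i = k <;> by_cases h2 : j = k <;>
      simp [h1, h2, hij, Ne.symm, eq_comm]

lemma permExpect_triple {N : ℕ} (a : Fin N → ℝ) {w w' w'' : Fin N}
    (h1 : w ≠ w') (h2 : w ≠ w'') (h3 : w' ≠ w'') :
    permExpect N (fun σ => a (σ w) * a (σ w') * a (σ w''))
      = (∑ t ∈ Finset.univ.filter
            (fun t : Fin N × Fin N × Fin N => t.1 ≠ t.2.1 ∧ t.1 ≠ t.2.2 ∧ t.2.1 ≠ t.2.2),
            a t.1 * a t.2.1 * a t.2.2)
        / ((Finset.univ.filter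
            (fun t : Fin N × Fin N × Fin N => t.1 ≠ t.2.1 ∧ t.1 ≠ t.2.2 ∧ t.2.1 ≠ t.2.2)).card : ℝ) := by
  classical
  set D := Finset.univ.filter
      (fun t : Fin N × Fin N × Fin N => t.1 ≠ t.2.1 ∧ t.1 ≠ t.2.2 ∧ t.2.1 ≠ t.2.2) with hD
  set g : Equiv.Perm (Fin N) → Fin N × Fin N × Fin N := fun σ => (σ w, σ w', σ w'') with hg
  have hmaps : ∀ σ ∈ (Finset.univ : Finset (Equiv.Perm (Fin N))), g σ ∈ D := by
    intro σ _
    simp only [hD, Finset.mem_filter, Finset.mem_univ, true_and, hg]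
    exact ⟨fun h => h1 (σ.injective h), fun h => h2 (σ.injective h), fun h => h3 (σ.injective h)⟩
  set c := (Finset.univ.filter fun σ : Equiv.Perm (Fin N) => g σ = (w, w', w'')).card with hcdef
  have hc : ∀ t ∈ D, (Finset.univ.filter fun σ => g σ = t).card = c := by
    intro t ht
    rw [hD, Finset.mem_filter] at ht
    obtain ⟨τ, hτ1, hτ2, hτ3⟩ := exists_perm_triple h1 h2 h3 ht.2.1 ht.2.2.1 ht.2.2.2
    refine Finset.card_nbij' (fun σ => τ⁻¹ * σ) (fun σ => τ * σ) ?_ ?_ ?_ ?_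
    · intro σ hσ
      simp only [Finset.mem_coe, Finset.mem_filter, Finset.mem_univ, true_and, hg] at hσ
      have e1 : σ w = t.1 := by rw [← hσ]
      have e2 : σ w' = t.2.1 := by rw [← hσ]
      have e3 : σ w'' = t.2.2 := by rw [← hσ]
      simp only [Finset.mem_coe, Finset.mem_filter, Finset.mem_univ, true_and, hg, Prod.mk.injEq,
        Equiv.Perm.mul_apply]
      rw [e1, e2, e3, ← hτ1, ← hτ2, ← hτ3]
      simp
    · intro σ hσ
      simp only [Finset.mem_coe, Finset.mem_filter, Finset.mem_univ, true_and, hg, Prod.mk.injEq] at hσ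
      simp only [Finset.mem_coe, Finset.mem_filter, Finset.mem_univ, true_and, hg, Equiv.Perm.mul_apply]
      rw [hσ.1, hσ.2.1, hσ.2.2, hτ1, hτ2, hτ3]
    · intro σ _; simp [mul_assoc]
    · intro σ _; simp [mul_assoc]
  have hc0 : 0 < c := by
    rw [hcdef]
    refine Finset.card_pos.2 ⟨1, ?_⟩
    simp [hg]
  have hsum : ∑ σ : Equiv.Perm (Fin N), a (σ w) * a (σ w') * a (σ w'')
      = (c : ℝ) * ∑ t ∈ D, a t.1 * a t.2.1 * a t.2.2 := by
    rw [← Finset.sum_fiberwise_of_maps_to hmaps (fun σ => a (σ w) * a (σ w') * a (σ w'')),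
      Finset.mul_sum]
    refine Finset.sum_congr rfl fun t ht => ?_
    have : ∀ σ ∈ Finset.univ.filter fun σ => g σ = t,
        a (σ w) * a (σ w') * a (σ w'') = a t.1 * a t.2.1 * a t.2.2 := by
      intro σ hσ
      simp only [Finset.mem_filter, Finset.mem_univ, true_and, hg] at hσ
      have e1 : σ w = t.1 := by rw [← hσ]
      have e2 : σ w' = t.2.1 := by rw [← hσ]
      have e3 : σ w'' = t.2.2 := by rw [← hσ]
      rw [e1, e2, e3]
    rw [Finset.sum_congr rfl this, Finset.sum_const, hc t ht, nsmul_eq_mul]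
  have hcard : (Fintype.card (Equiv.Perm (Fin N)) : ℝ) = (c : ℝ) * (D.card : ℝ) := by
    have : Fintype.card (Equiv.Perm (Fin N)) = c * D.card := by
      rw [← Finset.card_univ, Finset.card_eq_sum_card_fiberwise hmaps]
      rw [Finset.sum_congr rfl hc, Finset.sum_const, smul_eq_mul, mul_comm]
    exact_mod_cast congrArg (Nat.cast : ℕ → ℝ) this
  have hcne : (c : ℝ) ≠ 0 := by positivity
  rw [permExpect, hsum, hcard, mul_div_mul_left _ _ hcne]

set_option maxHeartbeats 2000000 in
/-- Theorem 3 (strict inequality): for nonnegative amplitudes whose squares are not all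
equal, for pairwise distinct positions `w, w', w''`, `E[X_w² · X_{w'}² · X_{w''}²] < m₂³`. -/
theorem corr_triple_second_lt (N : ℕ) (hN : 3 ≤ N) (u : Fin N → ℝ)
    (hpos : ∀ i, 0 ≤ u i)
    (hne : ∃ i j : Fin N, (u i) ^ 2 ≠ (u j) ^ 2)
    (w w' w'' : Fin N) (h1 : w ≠ w') (h2 : w ≠ w'') (h3 : w' ≠ w'') :
    permExpect N (fun σ => (u (σ w)) ^ 2 * (u (σ w')) ^ 2 * (u (σ w'')) ^ 2)
      < (empMoment N u 2) ^ 3 := by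
  classical
  set a : Fin N → ℝ := fun i => (u i) ^ 2 with ha
  have ha0 : ∀ i, 0 ≤ a i := fun i => sq_nonneg _
  set S1 : ℝ := ∑ i, a i with hS1
  set S2 : ℝ := ∑ i, (a i) ^ 2 with hS2
  set S3 : ℝ := ∑ i, (a i) ^ 3 with hS3
  have hn3 : (3 : ℝ) ≤ (N : ℝ) := by exact_mod_cast hN
  have hn0 : (0 : ℝ) < (N : ℝ) := by linarith
  set D := Finset.univ.filter
      (fun t : Fin N × Fin N × Fin N => t.1 ≠ t.2.1 ∧ t.1 ≠ t.2.2 ∧ t.2.1 ≠ t.2.2) with hD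
  -- helper sums over erased sets
  have E1 : ∀ (G : Fin N → ℝ) (i : Fin N),
      ∑ j ∈ Finset.univ.erase i, G j = (∑ j, G j) - G i :=
    fun G i => Finset.sum_erase_eq_sub (Finset.mem_univ i)
  have E2 : ∀ (G : Fin N → ℝ) (i j : Fin N), j ≠ i →
      ∑ k ∈ (Finset.univ.erase i).erase j, G k = (∑ k, G k) - G i - G j := by
    intro G i j hji
    rw [Finset.sum_erase_eq_sub (Finset.mem_erase.2 ⟨hji, Finset.mem_univ j⟩), E1]
  have hcard1 : ∀ i : Fin N, ((Finset.univ.erase i).card : ℝ) = (N : ℝ) - 1 := by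
    intro i
    rw [Finset.card_erase_of_mem (Finset.mem_univ i), Finset.card_univ, Fintype.card_fin,
      Nat.cast_sub (by omega : 1 ≤ N)]
    norm_num
  have hcard2 : ∀ (i j : Fin N), j ≠ i →
      ((((Finset.univ.erase i).erase j)).card : ℝ) = (N : ℝ) - 2 := by
    intro i j hji
    rw [Finset.card_erase_of_mem (Finset.mem_erase.2 ⟨hji, Finset.mem_univ j⟩),
      Finset.card_erase_of_mem (Finset.mem_univ i), Finset.card_univ, Fintype.card_fin,
      show N - 1 - 1 = N - 2 from by omega, Nat.cast_sub (by omega : 2 ≤ N)]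
    norm_num
  -- cardinality of D
  have hDcard : (D.card : ℝ) = (N : ℝ) * ((N : ℝ) - 1) * ((N : ℝ) - 2) := by
    have h0 : (D.card : ℝ) = ∑ t ∈ D, (1 : ℝ) := by
      rw [Finset.sum_const, nsmul_eq_mul, mul_one]
    rw [h0, hD, sum_distinct_triples (fun _ _ _ => (1 : ℝ))]
    have hinner : ∀ i : Fin N,
        ∑ j ∈ Finset.univ.erase i, ∑ k ∈ (Finset.univ.erase i).erase j, (1 : ℝ)
          = ((N : ℝ) - 1) * ((N : ℝ) - 2) := by
      intro i
      have : ∀ j ∈ Finset.univ.erase i,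
          ∑ k ∈ (Finset.univ.erase i).erase j, (1 : ℝ) = (N : ℝ) - 2 := by
        intro j hj
        rw [Finset.sum_const, nsmul_eq_mul, mul_one, hcard2 i j (Finset.ne_of_mem_erase hj)]
      rw [Finset.sum_congr rfl this, Finset.sum_const, nsmul_eq_mul, hcard1 i]
    rw [Finset.sum_congr rfl (fun i _ => hinner i), Finset.sum_const, nsmul_eq_mul,
      Finset.card_univ, Fintype.card_fin]
    ring
  -- closed form for the main triple sum
  have hT : ∑ t ∈ D, a t.1 * a t.2.1 * a t.2.2 = S1 ^ 3 - 3 * S1 * S2 + 2 * S3 := by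
    rw [hD, sum_distinct_triples (fun i j k => a i * a j * a k)]
    have step : ∀ i : Fin N,
        ∑ j ∈ Finset.univ.erase i, ∑ k ∈ (Finset.univ.erase i).erase j, a i * a j * a k
          = a i * (S1 - a i) * (S1 - a i) - a i * (S2 - (a i) ^ 2) := by
      intro i
      have inner : ∀ j ∈ Finset.univ.erase i,
          ∑ k ∈ (Finset.univ.erase i).erase j, a i * a j * a k
            = (a i * (S1 - a i)) * a j - a i * (a j) ^ 2 := by
        intro j hj
        rw [← Finset.mul_sum, E2 a i j (Finset.ne_of_mem_erase hj), ← hS1]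
        ring
      rw [Finset.sum_congr rfl inner, Finset.sum_sub_distrib, ← Finset.mul_sum,
        ← Finset.mul_sum, E1 a i, E1 (fun x => (a x) ^ 2) i, ← hS1, ← hS2]
      try ring
    rw [Finset.sum_congr rfl (fun i _ => step i)]
    have expand : ∀ i : Fin N,
        a i * (S1 - a i) * (S1 - a i) - a i * (S2 - (a i) ^ 2)
          = (S1 ^ 2 - S2) * a i - (2 * S1) * (a i) ^ 2 + 2 * (a i) ^ 3 := by
      intro i; ring
    rw [Finset.sum_congr rfl (fun i _ => expand i), Finset.sum_add_distrib,
      Finset.sum_sub_distrib, ← Finset.mul_sum, ← Finset.mul_sum, ← Finset.mul_sum,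
      ← hS1, ← hS2, ← hS3]
    ring
  -- the six square patterns
  have hP1 : ∑ t ∈ D, (a t.1) ^ 2 * a t.2.1 = ((N : ℝ) - 2) * (S1 * S2 - S3) := by
    rw [hD, sum_distinct_triples (fun i j k => (a i) ^ 2 * a j)]
    have step : ∀ i : Fin N,
        ∑ j ∈ Finset.univ.erase i, ∑ k ∈ (Finset.univ.erase i).erase j, (a i) ^ 2 * a j
          = ((N : ℝ) - 2) * ((a i) ^ 2 * (S1 - a i)) := by
      intro i
      have inner : ∀ j ∈ Finset.univ.erase i,
          ∑ k ∈ (Finset.univ.erase i).erase j, (a i) ^ 2 * a j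
            = (((N : ℝ) - 2) * (a i) ^ 2) * a j := by
        intro j hj
        rw [Finset.sum_const, nsmul_eq_mul, hcard2 i j (Finset.ne_of_mem_erase hj)]
        ring
      rw [Finset.sum_congr rfl inner, ← Finset.mul_sum, E1 a i, ← hS1]
      ring
    rw [Finset.sum_congr rfl (fun i _ => step i)]
    have expand : ∀ i : Fin N,
        ((N : ℝ) - 2) * ((a i) ^ 2 * (S1 - a i))
          = (((N : ℝ) - 2) * S1) * (a i) ^ 2 - ((N : ℝ) - 2) * (a i) ^ 3 := by
      intro i; ring
    rw [Finset.sum_congr rfl (fun i _ => expand i), Finset.sum_sub_distrib,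
      ← Finset.mul_sum, ← Finset.mul_sum, ← hS2, ← hS3]
    ring
  have hP4 : ∑ t ∈ D, (a t.1) ^ 2 * a t.2.2 = ((N : ℝ) - 2) * (S1 * S2 - S3) := by
    rw [hD, sum_distinct_triples (fun i j k => (a i) ^ 2 * a k)]
    have step : ∀ i : Fin N,
        ∑ j ∈ Finset.univ.erase i, ∑ k ∈ (Finset.univ.erase i).erase j, (a i) ^ 2 * a k
          = ((N : ℝ) - 2) * ((a i) ^ 2 * (S1 - a i)) := by
      intro i
      have inner : ∀ j ∈ Finset.univ.erase i,
          ∑ k ∈ (Finset.univ.erase i).erase j, (a i) ^ 2 * a k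
            = ((a i) ^ 2 * (S1 - a i)) - (a i) ^ 2 * a j := by
        intro j hj
        rw [← Finset.mul_sum, E2 a i j (Finset.ne_of_mem_erase hj), ← hS1]
        ring
      rw [Finset.sum_congr rfl inner, Finset.sum_sub_distrib, Finset.sum_const,
        nsmul_eq_mul, hcard1 i, ← Finset.mul_sum, E1 a i, ← hS1]
      ring
    rw [Finset.sum_congr rfl (fun i _ => step i)]
    have expand : ∀ i : Fin N,
        ((N : ℝ) - 2) * ((a i) ^ 2 * (S1 - a i))
          = (((N : ℝ) - 2) * S1) * (a i) ^ 2 - ((N : ℝ) - 2) * (a i) ^ 3 := by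
      intro i; ring
    rw [Finset.sum_congr rfl (fun i _ => expand i), Finset.sum_sub_distrib,
      ← Finset.mul_sum, ← Finset.mul_sum, ← hS2, ← hS3]
    ring
  have hP5 : ∑ t ∈ D, (a t.2.1) ^ 2 * a t.1 = ((N : ℝ) - 2) * (S1 * S2 - S3) := by
    rw [hD, sum_distinct_triples (fun i j k => (a j) ^ 2 * a i)]
    have step : ∀ i : Fin N,
        ∑ j ∈ Finset.univ.erase i, ∑ k ∈ (Finset.univ.erase i).erase j, (a j) ^ 2 * a i
          = ((N : ℝ) - 2) * (a i * (S2 - (a i) ^ 2)) := by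
      intro i
      have inner : ∀ j ∈ Finset.univ.erase i,
          ∑ k ∈ (Finset.univ.erase i).erase j, (a j) ^ 2 * a i
            = (((N : ℝ) - 2) * a i) * (a j) ^ 2 := by
        intro j hj
        rw [Finset.sum_const, nsmul_eq_mul, hcard2 i j (Finset.ne_of_mem_erase hj)]
        ring
      rw [Finset.sum_congr rfl inner, ← Finset.mul_sum, E1 (fun x => (a x) ^ 2) i, ← hS2]
      ring
    rw [Finset.sum_congr rfl (fun i _ => step i)]
    have expand : ∀ i : Fin N,
        ((N : ℝ) - 2) * (a i * (S2 - (a i) ^ 2))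
          = (((N : ℝ) - 2) * S2) * a i - ((N : ℝ) - 2) * (a i) ^ 3 := by
      intro i; ring
    rw [Finset.sum_congr rfl (fun i _ => expand i), Finset.sum_sub_distrib,
      ← Finset.mul_sum, ← Finset.mul_sum, ← hS1, ← hS3]
    ring
  have hP2 : ∑ t ∈ D, (a t.2.1) ^ 2 * a t.2.2 = ((N : ℝ) - 2) * (S1 * S2 - S3) := by
    rw [hD, sum_distinct_triples (fun i j k => (a j) ^ 2 * a k)]
    have step : ∀ i : Fin N,
        ∑ j ∈ Finset.univ.erase i, ∑ k ∈ (Finset.univ.erase i).erase j, (a j) ^ 2 * a k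
          = (S1 - a i) * (S2 - (a i) ^ 2) - (S3 - (a i) ^ 3) := by
      intro i
      have inner : ∀ j ∈ Finset.univ.erase i,
          ∑ k ∈ (Finset.univ.erase i).erase j, (a j) ^ 2 * a k
            = (S1 - a i) * (a j) ^ 2 - (a j) ^ 3 := by
        intro j hj
        rw [← Finset.mul_sum, E2 a i j (Finset.ne_of_mem_erase hj), ← hS1]
        ring
      rw [Finset.sum_congr rfl inner, Finset.sum_sub_distrib, ← Finset.mul_sum,
        E1 (fun x => (a x) ^ 2) i, E1 (fun x => (a x) ^ 3) i, ← hS2, ← hS3]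
    rw [Finset.sum_congr rfl (fun i _ => step i)]
    have expand : ∀ i : Fin N,
        (S1 - a i) * (S2 - (a i) ^ 2) - (S3 - (a i) ^ 3)
          = (S1 * S2 - S3) - S2 * a i - S1 * (a i) ^ 2 + 2 * (a i) ^ 3 := by
      intro i; ring
    rw [Finset.sum_congr rfl (fun i _ => expand i), Finset.sum_add_distrib,
      Finset.sum_sub_distrib, Finset.sum_sub_distrib, ← Finset.mul_sum, ← Finset.mul_sum,
      ← Finset.mul_sum, Finset.sum_const, nsmul_eq_mul, Finset.card_univ, Fintype.card_fin,
      ← hS1, ← hS2, ← hS3]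
    ring
  have hP6 : ∑ t ∈ D, (a t.2.2) ^ 2 * a t.2.1 = ((N : ℝ) - 2) * (S1 * S2 - S3) := by
    rw [hD, sum_distinct_triples (fun i j k => (a k) ^ 2 * a j)]
    have step : ∀ i : Fin N,
        ∑ j ∈ Finset.univ.erase i, ∑ k ∈ (Finset.univ.erase i).erase j, (a k) ^ 2 * a j
          = (S1 - a i) * (S2 - (a i) ^ 2) - (S3 - (a i) ^ 3) := by
      intro i
      have inner : ∀ j ∈ Finset.univ.erase i,
          ∑ k ∈ (Finset.univ.erase i).erase j, (a k) ^ 2 * a j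
            = (S2 - (a i) ^ 2) * a j - (a j) ^ 3 := by
        intro j hj
        rw [← Finset.sum_mul, E2 (fun x => (a x) ^ 2) i j (Finset.ne_of_mem_erase hj), ← hS2]
        ring
      rw [Finset.sum_congr rfl inner, Finset.sum_sub_distrib, ← Finset.mul_sum,
        E1 a i, E1 (fun x => (a x) ^ 3) i, ← hS1, ← hS3]
      ring
    rw [Finset.sum_congr rfl (fun i _ => step i)]
    have expand : ∀ i : Fin N,
        (S1 - a i) * (S2 - (a i) ^ 2) - (S3 - (a i) ^ 3)
          = (S1 * S2 - S3) - S2 * a i - S1 * (a i) ^ 2 + 2 * (a i) ^ 3 := by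
      intro i; ring
    rw [Finset.sum_congr rfl (fun i _ => expand i), Finset.sum_add_distrib,
      Finset.sum_sub_distrib, Finset.sum_sub_distrib, ← Finset.mul_sum, ← Finset.mul_sum,
      ← Finset.mul_sum, Finset.sum_const, nsmul_eq_mul, Finset.card_univ, Fintype.card_fin,
      ← hS1, ← hS2, ← hS3]
    ring
  have hP3 : ∑ t ∈ D, (a t.2.2) ^ 2 * a t.1 = ((N : ℝ) - 2) * (S1 * S2 - S3) := by
    rw [hD, sum_distinct_triples (fun i j k => (a k) ^ 2 * a i)]
    have step : ∀ i : Fin N,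
        ∑ j ∈ Finset.univ.erase i, ∑ k ∈ (Finset.univ.erase i).erase j, (a k) ^ 2 * a i
          = ((N : ℝ) - 2) * (a i * (S2 - (a i) ^ 2)) := by
      intro i
      have inner : ∀ j ∈ Finset.univ.erase i,
          ∑ k ∈ (Finset.univ.erase i).erase j, (a k) ^ 2 * a i
            = (S2 - (a i) ^ 2) * a i - a i * (a j) ^ 2 := by
        intro j hj
        rw [← Finset.sum_mul, E2 (fun x => (a x) ^ 2) i j (Finset.ne_of_mem_erase hj), ← hS2]
        ring
      rw [Finset.sum_congr rfl inner, Finset.sum_sub_distrib, Finset.sum_const,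
        nsmul_eq_mul, hcard1 i, ← Finset.mul_sum, E1 (fun x => (a x) ^ 2) i, ← hS2]
      ring
    rw [Finset.sum_congr rfl (fun i _ => step i)]
    have expand : ∀ i : Fin N,
        ((N : ℝ) - 2) * (a i * (S2 - (a i) ^ 2))
          = (((N : ℝ) - 2) * S2) * a i - ((N : ℝ) - 2) * (a i) ^ 3 := by
      intro i; ring
    rw [Finset.sum_congr rfl (fun i _ => expand i), Finset.sum_sub_distrib,
      ← Finset.mul_sum, ← Finset.mul_sum, ← hS1, ← hS3]
    ring
  -- AM-GM bound on the triple sum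
  have hAM : ∑ t ∈ D, a t.1 * a t.2.1 * a t.2.2 ≤ ((N : ℝ) - 2) * (S1 * S2 - S3) := by
    have key : ∑ t ∈ D, a t.1 * a t.2.1 * a t.2.2
        ≤ ∑ t ∈ D, (1 / 6 : ℝ) * ((a t.1) ^ 2 * a t.2.1 + (a t.1) ^ 2 * a t.2.2
            + (a t.2.1) ^ 2 * a t.1 + (a t.2.1) ^ 2 * a t.2.2
            + (a t.2.2) ^ 2 * a t.1 + (a t.2.2) ^ 2 * a t.2.1) := by
      refine Finset.sum_le_sum fun t _ => ?_
      have hx := ha0 t.1; have hy := ha0 t.2.1; have hz := ha0 t.2.2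
      nlinarith [mul_nonneg hy (sq_nonneg (a t.1 - a t.2.2)),
        mul_nonneg hz (sq_nonneg (a t.1 - a t.2.1)),
        mul_nonneg hx (sq_nonneg (a t.2.1 - a t.2.2))]
    have expand : ∑ t ∈ D, (1 / 6 : ℝ) * ((a t.1) ^ 2 * a t.2.1 + (a t.1) ^ 2 * a t.2.2
            + (a t.2.1) ^ 2 * a t.1 + (a t.2.1) ^ 2 * a t.2.2
            + (a t.2.2) ^ 2 * a t.1 + (a t.2.2) ^ 2 * a t.2.1)
        = ((N : ℝ) - 2) * (S1 * S2 - S3) := by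
      rw [← Finset.mul_sum]
      simp only [Finset.sum_add_distrib]
      rw [hP1, hP4, hP5, hP2, hP3, hP6]
      ring
    linarith [key, expand.le, expand.ge]
  -- strict Cauchy-Schwarz
  have hCS : S1 ^ 2 < (N : ℝ) * S2 := by
    have hsq : ∑ i : Fin N, ∑ j : Fin N, (a i - a j) ^ 2
        = 2 * ((N : ℝ) * S2 - S1 ^ 2) := by
      have step : ∀ i : Fin N, ∑ j : Fin N, (a i - a j) ^ 2
          = (N : ℝ) * (a i) ^ 2 - (2 * a i) * S1 + S2 := by
        intro i
        have expand : ∀ j : Fin N, (a i - a j) ^ 2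
            = (a i) ^ 2 - (2 * a i) * a j + (a j) ^ 2 := fun j => by ring
        rw [Finset.sum_congr rfl (fun j _ => expand j), Finset.sum_add_distrib,
          Finset.sum_sub_distrib, ← Finset.mul_sum, Finset.sum_const, nsmul_eq_mul,
          Finset.card_univ, Fintype.card_fin, ← hS1, ← hS2]
      rw [Finset.sum_congr rfl (fun i _ => step i)]
      have expand2 : ∀ i : Fin N, (N : ℝ) * (a i) ^ 2 - (2 * a i) * S1 + S2
          = (N : ℝ) * (a i) ^ 2 - (2 * S1) * a i + S2 := fun i => by ring
      rw [Finset.sum_congr rfl (fun i _ => expand2 i), Finset.sum_add_distrib,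
        Finset.sum_sub_distrib, ← Finset.mul_sum, ← Finset.mul_sum, Finset.sum_const,
        nsmul_eq_mul, Finset.card_univ, Fintype.card_fin, ← hS1, ← hS2]
      ring
    obtain ⟨i0, j0, hne0⟩ := hne
    have hterm : 0 < (a i0 - a j0) ^ 2 := by
      have : a i0 - a j0 ≠ 0 := sub_ne_zero.2 hne0
      positivity
    have hpos0 : 0 < ∑ i : Fin N, ∑ j : Fin N, (a i - a j) ^ 2 := by
      refine Finset.sum_pos' (fun i _ => Finset.sum_nonneg fun j _ => sq_nonneg _)
        ⟨i0, Finset.mem_univ _, ?_⟩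
      exact Finset.sum_pos' (fun j _ => sq_nonneg _) ⟨j0, Finset.mem_univ _, hterm⟩
    rw [hsq] at hpos0
    linarith
  -- positivity of S1
  have hS1pos : 0 < S1 := by
    obtain ⟨i0, j0, hne0⟩ := hne
    have : 0 < a i0 ∨ 0 < a j0 := by
      by_cases h : a i0 = 0
      · refine Or.inr (lt_of_le_of_ne (ha0 j0) ?_)
        intro hc
        exact hne0 (show a i0 = a j0 by rw [h, ← hc])
      · exact Or.inl (lt_of_le_of_ne (ha0 i0) (Ne.symm h))
    rcases this with h | h
    · exact lt_of_lt_of_le h (Finset.single_le_sum (fun i _ => ha0 i) (Finset.mem_univ i0))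
    · exact lt_of_lt_of_le h (Finset.single_le_sum (fun i _ => ha0 i) (Finset.mem_univ j0))
  -- assemble
  set T : ℝ := ∑ t ∈ D, a t.1 * a t.2.1 * a t.2.2 with hTdef
  have hA : (N : ℝ) * T ≤ ((N : ℝ) - 2) * (S1 ^ 3 - S1 * S2) := by
    have e : ((N : ℝ) - 2) * (S1 ^ 3 - S1 * S2)
        = ((N : ℝ) - 2) * T + 2 * (((N : ℝ) - 2) * (S1 * S2 - S3)) := by
      rw [hT]; ring
    have h2T : 2 * T ≤ 2 * (((N : ℝ) - 2) * (S1 * S2 - S3)) := by linarith [hAM]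
    linarith [h2T, e]
  have hden : (0 : ℝ) < (N : ℝ) * ((N : ℝ) - 1) * ((N : ℝ) - 2) := by
    exact mul_pos (mul_pos hn0 (by linarith)) (by linarith)
  have hfin : T * (N : ℝ) ^ 3 < S1 ^ 3 * ((N : ℝ) * ((N : ℝ) - 1) * ((N : ℝ) - 2)) := by
    have hstep1 : (N : ℝ) ^ 2 * ((N : ℝ) * T)
        ≤ (N : ℝ) ^ 2 * (((N : ℝ) - 2) * (S1 ^ 3 - S1 * S2)) :=
      mul_le_mul_of_nonneg_left hA (sq_nonneg _)
    have hstep2 : ((N : ℝ) - 2) * S1 * ((N : ℝ) ^ 2 * S1 ^ 2 - (N : ℝ) ^ 2 * S2)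
        < ((N : ℝ) - 2) * S1 * ((N : ℝ) * ((N : ℝ) - 1) * S1 ^ 2) := by
      refine mul_lt_mul_of_pos_left ?_ (mul_pos (by linarith) hS1pos)
      nlinarith [mul_lt_mul_of_pos_left hCS hn0]
    have e1 : (N : ℝ) ^ 2 * (((N : ℝ) - 2) * (S1 ^ 3 - S1 * S2))
        = ((N : ℝ) - 2) * S1 * ((N : ℝ) ^ 2 * S1 ^ 2 - (N : ℝ) ^ 2 * S2) := by ring
    have e2 : ((N : ℝ) - 2) * S1 * ((N : ℝ) * ((N : ℝ) - 1) * S1 ^ 2)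
        = S1 ^ 3 * ((N : ℝ) * ((N : ℝ) - 1) * ((N : ℝ) - 2)) := by ring
    have e3 : T * (N : ℝ) ^ 3 = (N : ℝ) ^ 2 * ((N : ℝ) * T) := by ring
    linarith [hstep1, hstep2]
  have hm : empMoment N u 2 = 1 / (N : ℝ) * S1 := rfl
  have hPE : permExpect N (fun σ => (u (σ w)) ^ 2 * (u (σ w')) ^ 2 * (u (σ w'')) ^ 2)
      = T / ((N : ℝ) * ((N : ℝ) - 1) * ((N : ℝ) - 2)) := by
    have := permExpect_triple a h1 h2 h3
    rw [← hD, ← hTdef, hDcard] at this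
    exact this
  have hshape : (1 / (N : ℝ) * S1) ^ 3 * ((N : ℝ) * ((N : ℝ) - 1) * ((N : ℝ) - 2))
      = S1 ^ 3 * ((N : ℝ) * ((N : ℝ) - 1) * ((N : ℝ) - 2)) / (N : ℝ) ^ 3 := by
    field_simp
    try ring
  rw [hPE, hm, div_lt_iff₀ hden, hshape, lt_div_iff₀ (by positivity : (0:ℝ) < (N : ℝ) ^ 3)]
  exact hfin
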